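/- Existence and uniqueness of reduced representatives: For every divisor d on a connected weightless loopless multigraph G and every vertex u ∈ V, there exists a unique u-reduced divisor d' linearly equivalent to d. -/

import Mathlib

open Finset

section Preliminaries

variable {V : Type} [Fintype V] [DecidableEq V]

/-- The degree of a divisor on a graph with vertex set `V`. -/
def degDiv (d : V → ℤ) : ℤ := ∑ v, d v

/-- A divisor is effective if it is nonnegative at every vertex. -/
def Effective (d : V → ℤ) : Prop := ∀ v, 0 ≤ d v

/-- The principal divisor `t_Z` associated to a subset `Z` of vertices, for the
graph with edge multiplicity function `m`. -/
def tZ (m : V → V → ℕ) (Z : Finset V) : V → ℤ := fun v =>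
  if v ∈ Z then -(∑ u ∈ Zᶜ, (m v u : ℤ)) else ∑ u ∈ Z, (m v u : ℤ)

/-- Two divisors are linearly equivalent if their difference lies in the subgroup
generated by the divisors `t_Z`. -/
def LinEquiv (m : V → V → ℕ) (d d' : V → ℤ) : Prop :=
  d - d' ∈ AddSubgroup.closure (Set.range (tZ m))

/-- The simple graph associated to an edge multiplicity function `m`
(an edge between distinct `u`, `v` whenever `m u v > 0`; loops are discarded). -/
def assocGraph (m : V → V → ℕ) : SimpleGraph V where
  Adj u v := u ≠ v ∧ (0 < m u v ∨ 0 < m v u)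
  symm := ⟨fun _ _ h => ⟨h.1.symm, h.2.symm⟩⟩
  loopless := ⟨fun _ h => h.1 rfl⟩

end Preliminaries

section Reduced

variable {V : Type} [Fintype V] [DecidableEq V]

/-- A divisor `d` is `u`-reduced if it is nonnegative away from `u`, and every
nonempty subset `A` of `V \ {u}` contains a vertex `v` with
`d v < ∑_{w ∉ A} m v w`. -/
def UReduced (m : V → V → ℕ) (u : V) (d : V → ℤ) : Prop :=
  (∀ v, v ≠ u → 0 ≤ d v) ∧
    ∀ A : Finset V, A.Nonempty → u ∉ A →
      ∃ v ∈ A, d v < ∑ w ∈ Aᶜ, (m v w : ℤ)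

end Reduced

set_option linter.unusedSectionVars false

section LapAux
variable {V : Type} [Fintype V] [DecidableEq V]

/-- The (negated) Laplacian of `f`. -/
def lap (m : V → V → ℕ) (f : V → ℤ) : V → ℤ := fun v => ∑ w, (m v w : ℤ) * (f w - f v)

lemma tZ_eq_lap (m : V → V → ℕ) (Z : Finset V) :
    tZ m Z = lap m (fun v => if v ∈ Z then 1 else 0) := by
  funext v
  simp only [tZ, lap]
  rw [← Finset.sum_add_sum_compl Z]
  by_cases hv : v ∈ Z
  · rw [if_pos hv]
    have h1 : ∑ w ∈ Z, (m v w : ℤ) * ((if w ∈ Z then (1:ℤ) else 0) - (if v ∈ Z then 1 else 0)) = 0 := by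
      apply Finset.sum_eq_zero; intro w hw; rw [if_pos hw, if_pos hv]; ring
    have h2 : ∑ w ∈ Zᶜ, (m v w : ℤ) * ((if w ∈ Z then (1:ℤ) else 0) - (if v ∈ Z then 1 else 0)) =
        -(∑ u ∈ Zᶜ, (m v u : ℤ)) := by
      rw [← Finset.sum_neg_distrib]
      apply Finset.sum_congr rfl; intro w hw
      rw [if_neg (Finset.mem_compl.mp hw), if_pos hv]; ring
    rw [h1, h2, zero_add]
  · rw [if_neg hv]
    have h1 : ∑ w ∈ Z, (m v w : ℤ) * ((if w ∈ Z then (1:ℤ) else 0) - (if v ∈ Z then 1 else 0)) =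
        ∑ u ∈ Z, (m v u : ℤ) := by
      apply Finset.sum_congr rfl; intro w hw; rw [if_pos hw, if_neg hv]; ring
    have h2 : ∑ w ∈ Zᶜ, (m v w : ℤ) * ((if w ∈ Z then (1:ℤ) else 0) - (if v ∈ Z then 1 else 0)) = 0 := by
      apply Finset.sum_eq_zero; intro w hw
      rw [if_neg (Finset.mem_compl.mp hw), if_neg hv]; ring
    rw [h1, h2, add_zero]

lemma lap_mem_closure (m : V → V → ℕ) (hloop : ∀ v, m v v = 0) (f : V → ℤ) :
    lap m f ∈ AddSubgroup.closure (Set.range (tZ m)) := by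
  have key : lap m f = ∑ w, f w • tZ m {w} := by
    funext v
    rw [Finset.sum_apply]
    simp only [Pi.smul_apply, smul_eq_mul]
    have h1 : ∀ w, tZ m {w} v =
        (if v = w then -(∑ x ∈ ({w} : Finset V)ᶜ, (m v x : ℤ)) else (m v w : ℤ)) := by
      intro w
      simp [tZ, Finset.mem_singleton]
    simp_rw [h1]
    rw [Finset.sum_eq_sum_sdiff_singleton_add (Finset.mem_univ v)]
    rw [if_pos rfl]
    have h2 : ∑ w ∈ univ \ {v}, f w * (if v = w then -(∑ x ∈ ({w} : Finset V)ᶜ, (m v x : ℤ)) else (m v w : ℤ))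
        = ∑ w ∈ univ \ {v}, f w * (m v w : ℤ) := by
      apply Finset.sum_congr rfl; intro w hw
      rw [if_neg]
      intro h; subst h; simp at hw
    rw [h2]
    have h3 : ∑ x ∈ ({v} : Finset V)ᶜ, (m v x : ℤ) = ∑ x, (m v x : ℤ) := by
      rw [← Finset.sum_add_sum_compl ({v} : Finset V)]
      simp [hloop v]
    have h4 : ∑ w ∈ univ \ {v}, f w * (m v w : ℤ) = ∑ w, f w * (m v w : ℤ) := by
      rw [Finset.sum_eq_sum_sdiff_singleton_add (Finset.mem_univ v) (fun w => f w * (m v w : ℤ))]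
      simp [hloop v]
    rw [h3, h4, mul_neg, Finset.mul_sum, ← sub_eq_add_neg, ← Finset.sum_sub_distrib]
    apply Finset.sum_congr rfl; intro w _; ring
  rw [key]
  exact AddSubgroup.sum_mem _ fun w _ =>
    AddSubgroup.zsmul_mem _ (AddSubgroup.subset_closure (Set.mem_range_self {w})) _

lemma lap_add (m : V → V → ℕ) (f g : V → ℤ) : lap m (f + g) = lap m f + lap m g := by
  funext v
  simp only [lap, Pi.add_apply, ← Finset.sum_add_distrib]
  apply Finset.sum_congr rfl; intro w _; ring

lemma lap_neg (m : V → V → ℕ) (f : V → ℤ) : lap m (-f) = -(lap m f) := by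
  funext v
  simp only [lap, Pi.neg_apply, ← Finset.sum_neg_distrib]
  apply Finset.sum_congr rfl; intro w _; ring

lemma mem_closure_iff_lap (m : V → V → ℕ) (hloop : ∀ v, m v v = 0) (x : V → ℤ) :
    x ∈ AddSubgroup.closure (Set.range (tZ m)) ↔ ∃ f, x = lap m f := by
  constructor
  · intro hx
    let L : (V → ℤ) →+ (V → ℤ) :=
      { toFun := lap m
        map_zero' := by funext v; simp [lap]
        map_add' := lap_add m }
    have hsub : AddSubgroup.closure (Set.range (tZ m)) ≤ L.range := by
      rw [AddSubgroup.closure_le]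
      rintro _ ⟨Z, rfl⟩
      exact ⟨fun v => if v ∈ Z then 1 else 0, (tZ_eq_lap m Z).symm⟩
    obtain ⟨f, hf⟩ := hsub hx
    exact ⟨f, hf.symm⟩
  · rintro ⟨f, rfl⟩
    exact lap_mem_closure m hloop f

end LapAux

section DistAux
variable {V : Type} [Fintype V] [DecidableEq V]



lemma dist_lt_card {G : SimpleGraph V} (hconn : G.Connected) (u v : V) :
    G.dist u v < Fintype.card V := by
  obtain ⟨p⟩ := hconn u v
  calc G.dist u v ≤ p.bypass.length := SimpleGraph.dist_le _
    _ < Fintype.card V := p.bypass_isPath.length_lt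

lemma adj_dist_le {G : SimpleGraph V} (hconn : G.Connected) {u v w : V} (h : G.Adj v w) :
    G.dist u w ≤ G.dist u v + 1 := by
  have h1 := hconn.dist_triangle (u := u) (v := v) (w := w)
  have h2 : G.dist v w ≤ 1 := by
    have := SimpleGraph.dist_le h.toWalk
    simpa using this
  omega

lemma exists_adj_pred {G : SimpleGraph V} (hconn : G.Connected) {u v : V} (h : v ≠ u) :
    ∃ w, G.Adj v w ∧ G.dist u w + 1 = G.dist u v := by
  obtain ⟨q, hq⟩ := (hconn v u).exists_walk_length_eq_dist
  cases q with
  | nil => exact absurd rfl h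
  | @cons _ w _ hadj q' =>
    refine ⟨w, hadj, ?_⟩
    have hlen : G.dist v u = q'.length + 1 := by
      rw [← hq, SimpleGraph.Walk.length_cons]
    have h1 : G.dist u w ≤ q'.length := by
      have := SimpleGraph.dist_le q'.reverse
      simpa using this
    have h2 : G.dist u v ≤ G.dist u w + 1 := adj_dist_le hconn hadj.symm
    have h3 : G.dist u v = G.dist v u := SimpleGraph.dist_comm ..
    omega

lemma dist_pos_of_ne {G : SimpleGraph V} (hconn : G.Connected) {u v : V} (h : v ≠ u) :
    0 < G.dist u v := hconn.pos_dist_of_ne (Ne.symm h)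

end DistAux

section ShellAux
variable {V : Type} [Fintype V] [DecidableEq V]


/-- Big base for the shell potential. -/
def EE (m : V → V → ℕ) : ℕ := 2 + ∑ v, ∑ w, m v w

/-- Shell potential value at distance `j`. -/
def aSh (m : V → V → ℕ) : ℕ → ℤ :=
  fun j => ∑ i ∈ Finset.range j, (EE m : ℤ) ^ (Fintype.card V - i)

lemma EE_ge_two (m : V → V → ℕ) : 2 ≤ EE m := Nat.le_add_right 2 _

lemma aSh_zero (m : V → V → ℕ) : aSh m 0 = 0 := by simp [aSh]

lemma aSh_gap (m : V → V → ℕ) (k : ℕ) :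
    aSh m (k + 1) - aSh m k = (EE m : ℤ) ^ (Fintype.card V - k) := by
  simp [aSh, Finset.sum_range_succ]

lemma aSh_mono (m : V → V → ℕ) : Monotone (aSh m) := by
  intro i k hik
  apply Finset.sum_le_sum_of_subset_of_nonneg (Finset.range_subset_range.mpr hik)
  intro j _ _
  positivity

lemma aSh_nonneg (m : V → V → ℕ) (j : ℕ) : 0 ≤ aSh m j := by
  rw [← aSh_zero m]; exact aSh_mono m (Nat.zero_le j)

lemma aSh_diff_le (m : V → V → ℕ) {i k : ℕ} (h : k ≤ i + 1) :
    aSh m k - aSh m i ≤ (EE m : ℤ) ^ (Fintype.card V - i) := by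
  rcases Nat.lt_or_ge k (i + 1) with h' | h'
  · have : aSh m k ≤ aSh m i := aSh_mono m (Nat.lt_succ_iff.mp h')
    have : aSh m k - aSh m i ≤ 0 := by omega
    calc aSh m k - aSh m i ≤ 0 := this
      _ ≤ _ := by positivity
  · have : k = i + 1 := le_antisymm h h'
    subst this
    exact le_of_eq (aSh_gap m i)

lemma pow_le_pow_exp (m : V → V → ℕ) {i j : ℕ} (h : j ≤ i) :
    (EE m : ℤ) ^ (Fintype.card V - i) ≤ (EE m : ℤ) ^ (Fintype.card V - j) := by
  apply pow_le_pow_right₀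
  · exact_mod_cast Nat.one_le_of_lt (EE_ge_two m)
  · omega

lemma one_le_powE (m : V → V → ℕ) (n : ℕ) : (1:ℤ) ≤ (EE m : ℤ) ^ n := by
  apply one_le_pow₀
  exact_mod_cast Nat.one_le_of_lt (EE_ge_two m)

lemma sum_m_le (m : V → V → ℕ) (s : Finset (V × V)) :
    ∑ p ∈ s, (m p.1 p.2 : ℤ) ≤ (EE m : ℤ) - 2 := by
  have h1 : ∑ p ∈ s, (m p.1 p.2 : ℤ) ≤ ∑ p ∈ (univ ×ˢ univ : Finset (V × V)), (m p.1 p.2 : ℤ) := by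
    have hsub : s ⊆ (univ ×ˢ univ : Finset (V × V)) := by intro p _; simp
    apply Finset.sum_le_sum_of_subset_of_nonneg hsub
    intro p _ _; positivity
  have h2 : ∑ p ∈ (univ ×ˢ univ : Finset (V × V)), (m p.1 p.2 : ℤ) = ((∑ v, ∑ w, m v w : ℕ) : ℤ) := by
    rw [Finset.sum_product]; push_cast; rfl
  have h3 : ((∑ v, ∑ w, m v w : ℕ) : ℤ) = (EE m : ℤ) - 2 := by
    push_cast [EE]; ring
  omega

end ShellAux

section Estimates
variable {V : Type} [Fintype V] [DecidableEq V]

lemma m_pos_of_adj {m : V → V → ℕ} (hsymm : ∀ u v, m u v = m v u) {v w : V}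
    (h : (assocGraph m).Adj v w) : 0 < m v w := by
  rcases h.2 with h' | h'
  · exact h'
  · rw [hsymm]; exact h'

lemma adj_of_m_pos {m : V → V → ℕ} {v w : V} (hne : v ≠ w) (h : 0 < m v w) :
    (assocGraph m).Adj v w := ⟨hne, Or.inl h⟩

/-- Step 1 pointwise estimate: pouring along shells gains at least 1 at each `v ≠ u`. -/
lemma step1_pt (m : V → V → ℕ) (hsymm : ∀ u v, m u v = m v u) (hloop : ∀ v, m v v = 0)
    (hconn : (assocGraph m).Connected) (u v : V) (hv : v ≠ u) :
    1 ≤ ∑ w, (m v w : ℤ) *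
      (aSh m ((assocGraph m).dist u v) - aSh m ((assocGraph m).dist u w)) := by
  set G := assocGraph m with hG
  set D := Fintype.card V with hD
  set j := G.dist u v with hj
  have hj1 : 0 < j := dist_pos_of_ne hconn hv
  have hjD : j < D := dist_lt_card hconn u v
  obtain ⟨w₀, hadj, hw₀⟩ := exists_adj_pred hconn hv
  set k := G.dist u w₀ with hk
  have hDk : D - k = (D - j) + 1 := by omega
  have hgap : aSh m j - aSh m k = (EE m : ℤ) ^ ((D - j) + 1) := by
    have := aSh_gap m k
    rw [hw₀] at this
    rw [this, hDk]
  rw [Finset.sum_eq_sum_sdiff_singleton_add (Finset.mem_univ w₀)]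
  have hm₀ : (1:ℤ) ≤ (m v w₀ : ℤ) := by exact_mod_cast m_pos_of_adj hsymm hadj
  have hterm₀ : (EE m : ℤ) ^ ((D - j) + 1) ≤ (m v w₀ : ℤ) * (aSh m j - aSh m k) := by
    rw [hgap]
    nlinarith [one_le_powE m ((D - j) + 1)]
  have hrest : -(((EE m : ℤ) - 2) * (EE m : ℤ) ^ (D - j)) ≤
      ∑ w ∈ univ \ {w₀}, (m v w : ℤ) * (aSh m j - aSh m (G.dist u w)) := by
    have hpt : ∀ w ∈ univ \ {w₀},
        -((m v w : ℤ) * (EE m : ℤ) ^ (D - j)) ≤ (m v w : ℤ) * (aSh m j - aSh m (G.dist u w)) := by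
      intro w _
      rcases Nat.eq_zero_or_pos (m v w) with h0 | h0
      · simp [h0]
      · have hne : v ≠ w := by
          intro h; subst h; rw [hloop v] at h0; exact absurd h0 (lt_irrefl 0)
        have hadj' : G.Adj v w := adj_of_m_pos hne h0
        have hle : G.dist u w ≤ j + 1 := adj_dist_le hconn hadj'
        have := aSh_diff_le m (i := j) (k := G.dist u w) hle
        nlinarith [show (0:ℤ) < (m v w : ℤ) from by exact_mod_cast h0]
    calc -(((EE m : ℤ) - 2) * (EE m : ℤ) ^ (D - j))
        ≤ -((∑ w ∈ univ \ {w₀}, (m v w : ℤ)) * (EE m : ℤ) ^ (D - j)) := by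
          have hs : (∑ w ∈ univ \ {w₀}, (m v w : ℤ)) ≤ (EE m : ℤ) - 2 := by
            have := sum_m_le m ((univ \ {w₀}).image (fun w => (v, w)))
            rwa [Finset.sum_image (by intro a _ b _ h; simpa using h)] at this
          nlinarith [one_le_powE m (D - j)]
      _ = ∑ w ∈ univ \ {w₀}, -((m v w : ℤ) * (EE m : ℤ) ^ (D - j)) := by
          rw [Finset.sum_mul, Finset.sum_neg_distrib]
      _ ≤ _ := Finset.sum_le_sum hpt
  have hp := one_le_powE m (D - j)
  have hE : (2:ℤ) ≤ (EE m : ℤ) := by exact_mod_cast EE_ge_two m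
  have hpow : (EE m : ℤ) ^ ((D - j) + 1) = (EE m : ℤ) ^ (D - j) * (EE m : ℤ) := pow_succ _ _
  nlinarith

end Estimates

section Cut
variable {V : Type} [Fintype V] [DecidableEq V]

/-- Step 2 cut estimate: firing a legal set strictly decreases the shell potential. -/
lemma cut_neg (m : V → V → ℕ) (hsymm : ∀ u v, m u v = m v u) (hloop : ∀ v, m v v = 0)
    (hconn : (assocGraph m).Connected) (u : V) (A : Finset V) (hA : A.Nonempty) (hu : u ∉ A) :
    ∑ p ∈ A ×ˢ Aᶜ, (m p.1 p.2 : ℤ) *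
      (aSh m ((assocGraph m).dist u p.2) - aSh m ((assocGraph m).dist u p.1)) < 0 := by
  set G := assocGraph m with hG
  set D := Fintype.card V with hD
  obtain ⟨v₀, hv₀A, hmin⟩ := Finset.exists_min_image A (fun v => G.dist u v) hA
  have hv₀u : v₀ ≠ u := fun h => hu (h ▸ hv₀A)
  set j := G.dist u v₀ with hj
  have hj1 : 0 < j := dist_pos_of_ne hconn hv₀u
  have hjD : j < D := dist_lt_card hconn u v₀
  obtain ⟨w₀, hadj, hw₀⟩ := exists_adj_pred hconn hv₀u
  set k := G.dist u w₀ with hk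
  have hw₀A : w₀ ∉ A := by
    intro hmem
    have := hmin w₀ hmem
    omega
  have hmem : (v₀, w₀) ∈ A ×ˢ Aᶜ := Finset.mem_product.mpr ⟨hv₀A, Finset.mem_compl.mpr hw₀A⟩
  have hDk : D - k = (D - j) + 1 := by omega
  have hgap : aSh m k - aSh m j = -((EE m : ℤ) ^ ((D - j) + 1)) := by
    have := aSh_gap m k
    rw [hw₀] at this
    rw [← hj] at this
    rw [← hDk, ← this]; ring
  rw [Finset.sum_eq_sum_sdiff_singleton_add hmem]
  have hm₀ : (1:ℤ) ≤ (m v₀ w₀ : ℤ) := by exact_mod_cast m_pos_of_adj hsymm hadj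
  have hterm₀ : (m v₀ w₀ : ℤ) * (aSh m k - aSh m j) ≤ -((EE m : ℤ) ^ ((D - j) + 1)) := by
    rw [hgap]
    nlinarith [one_le_powE m ((D - j) + 1)]
  have hrest : ∑ p ∈ (A ×ˢ Aᶜ) \ {(v₀, w₀)},
      (m p.1 p.2 : ℤ) * (aSh m (G.dist u p.2) - aSh m (G.dist u p.1)) ≤
      ((EE m : ℤ) - 2) * (EE m : ℤ) ^ (D - j) := by
    have hpt : ∀ p ∈ (A ×ˢ Aᶜ) \ {(v₀, w₀)},
        (m p.1 p.2 : ℤ) * (aSh m (G.dist u p.2) - aSh m (G.dist u p.1)) ≤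
        (m p.1 p.2 : ℤ) * (EE m : ℤ) ^ (D - j) := by
      intro p hp
      obtain ⟨hpA, -⟩ := Finset.mem_sdiff.mp hp
      obtain ⟨hp1, hp2⟩ := Finset.mem_product.mp hpA
      rcases Nat.eq_zero_or_pos (m p.1 p.2) with h0 | h0
      · simp [h0]
      · have hne : p.1 ≠ p.2 := by
          intro h
          exact (Finset.mem_compl.mp hp2) (h ▸ hp1)
        have hadj' : G.Adj p.1 p.2 := adj_of_m_pos hne h0
        have hle : G.dist u p.2 ≤ G.dist u p.1 + 1 := adj_dist_le hconn hadj'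
        have h1 := aSh_diff_le m (i := G.dist u p.1) (k := G.dist u p.2) hle
        have h2 : (EE m : ℤ) ^ (D - G.dist u p.1) ≤ (EE m : ℤ) ^ (D - j) :=
          pow_le_pow_exp m (hmin p.1 hp1)
        have h3 : (0:ℤ) ≤ (m p.1 p.2 : ℤ) := by positivity
        nlinarith
    calc ∑ p ∈ (A ×ˢ Aᶜ) \ {(v₀, w₀)},
          (m p.1 p.2 : ℤ) * (aSh m (G.dist u p.2) - aSh m (G.dist u p.1))
        ≤ ∑ p ∈ (A ×ˢ Aᶜ) \ {(v₀, w₀)}, (m p.1 p.2 : ℤ) * (EE m : ℤ) ^ (D - j) :=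
          Finset.sum_le_sum hpt
      _ = (∑ p ∈ (A ×ˢ Aᶜ) \ {(v₀, w₀)}, (m p.1 p.2 : ℤ)) * (EE m : ℤ) ^ (D - j) :=
          (Finset.sum_mul _ _ _).symm
      _ ≤ ((EE m : ℤ) - 2) * (EE m : ℤ) ^ (D - j) := by
          have := sum_m_le m ((A ×ˢ Aᶜ) \ {(v₀, w₀)})
          nlinarith [one_le_powE m (D - j)]
  have hp := one_le_powE m (D - j)
  have hE : (2:ℤ) ≤ (EE m : ℤ) := by exact_mod_cast EE_ge_two m
  have hpow : (EE m : ℤ) ^ ((D - j) + 1) = (EE m : ℤ) ^ (D - j) * (EE m : ℤ) := pow_succ _ _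
  nlinarith

end Cut

section CutFormula
variable {V : Type} [Fintype V] [DecidableEq V]

lemma sum_tZ_mul (m : V → V → ℕ) (hsymm : ∀ u v, m u v = m v u) (Z : Finset V) (b : V → ℤ) :
    ∑ v, tZ m Z v * b v = ∑ p ∈ Z ×ˢ Zᶜ, (m p.1 p.2 : ℤ) * (b p.2 - b p.1) := by
  rw [Finset.sum_product]
  rw [← Finset.sum_add_sum_compl Z (fun v => tZ m Z v * b v)]
  have h1 : ∑ v ∈ Z, tZ m Z v * b v = ∑ v ∈ Z, ∑ w ∈ Zᶜ, -((m v w : ℤ) * b v) := by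
    apply Finset.sum_congr rfl; intro v hv
    rw [tZ, if_pos hv, neg_mul, Finset.sum_mul, Finset.sum_neg_distrib]
  have h2 : ∑ v ∈ Zᶜ, tZ m Z v * b v = ∑ v ∈ Z, ∑ w ∈ Zᶜ, (m w v : ℤ) * b w := by
    rw [Finset.sum_comm]
    apply Finset.sum_congr rfl; intro v hv
    rw [tZ, if_neg (Finset.mem_compl.mp hv), Finset.sum_mul]
  rw [h1, h2, ← Finset.sum_add_distrib]
  apply Finset.sum_congr rfl; intro v _
  rw [← Finset.sum_add_distrib]
  apply Finset.sum_congr rfl; intro w _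
  rw [hsymm w v]; ring

end CutFormula

section UniqAux
variable {V : Type} [Fintype V] [DecidableEq V]

lemma reduced_aux (m : V → V → ℕ) (u : V) (d1 d2 : V → ℤ) (f : V → ℤ)
    (h1 : ∀ v, v ≠ u → 0 ≤ d1 v)
    (h2 : ∀ A : Finset V, A.Nonempty → u ∉ A → ∃ v ∈ A, d2 v < ∑ w ∈ Aᶜ, (m v w : ℤ))
    (hf : ∀ v, d1 v = d2 v + lap m f v) (hex : ∃ v, f u < f v) : False := by
  have hne : (Finset.univ.image f).Nonempty := ⟨f u, Finset.mem_image_of_mem f (Finset.mem_univ u)⟩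
  set M := (Finset.univ.image f).max' hne with hM
  have hle : ∀ v, f v ≤ M := fun v =>
    Finset.le_max' _ _ (Finset.mem_image_of_mem f (Finset.mem_univ v))
  set A : Finset V := Finset.univ.filter (fun v => f v = M) with hA
  have hAne : A.Nonempty := by
    obtain ⟨y, hy⟩ := Finset.mem_image.mp ((Finset.univ.image f).max'_mem hne)
    exact ⟨y, Finset.mem_filter.mpr ⟨Finset.mem_univ y, hy.2⟩⟩
  have huA : u ∉ A := by
    obtain ⟨x, hx⟩ := hex
    intro hu
    have := (Finset.mem_filter.mp hu).2
    have := hle x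
    omega
  obtain ⟨v, hvA, hlt⟩ := h2 A hAne huA
  have hfv : f v = M := (Finset.mem_filter.mp hvA).2
  have hlap : lap m f v ≤ -(∑ w ∈ Aᶜ, (m v w : ℤ)) := by
    rw [lap]
    rw [← Finset.sum_add_sum_compl A (fun w => (m v w : ℤ) * (f w - f v))]
    have hz : ∑ w ∈ A, (m v w : ℤ) * (f w - f v) = 0 := by
      apply Finset.sum_eq_zero
      intro w hw
      rw [(Finset.mem_filter.mp hw).2, hfv]; ring
    rw [hz, zero_add]
    rw [← Finset.sum_neg_distrib]
    apply Finset.sum_le_sum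
    intro w hw
    have hwM : f w ≠ M := fun h =>
      (Finset.mem_compl.mp hw) (Finset.mem_filter.mpr ⟨Finset.mem_univ w, h⟩)
    have h1' : f w - f v ≤ -1 := by
      have := hle w
      omega
    have h2' : (0:ℤ) ≤ (m v w : ℤ) := by positivity
    nlinarith
  have hvu : v ≠ u := fun h => huA (h ▸ hvA)
  have := h1 v hvu
  have := hf v
  omega

end UniqAux

/-- **Existence and uniqueness of reduced representatives.** -/
theorem exists_unique_reduced {V : Type} [Fintype V] [DecidableEq V]
    (m : V → V → ℕ) (hsymm : ∀ u v, m u v = m v u) (hloop : ∀ v, m v v = 0)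
    (hconn : (assocGraph m).Connected)
    (d : V → ℤ) (u : V) :
    ∃! d' : V → ℤ, LinEquiv m d d' ∧ UReduced m u d' := by
  classical
  set G := assocGraph m with hG
  set b : V → ℤ := fun v => aSh m (G.dist u v) with hb
  have hb_nonneg : ∀ v, 0 ≤ b v := fun v => aSh_nonneg m _
  have hbu : b u = 0 := by
    simp only [hb, SimpleGraph.dist_self, aSh_zero]
  -- Step 1: an effective-off-u representative
  set K : ℤ := ∑ v, |d v| with hK
  have hKd : ∀ v, -d v ≤ K := by
    intro v
    have h1 : |d v| ≤ K := Finset.single_le_sum (fun w _ => abs_nonneg (d w)) (Finset.mem_univ v)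
    have := neg_abs_le (d v)
    omega
  have hK0 : 0 ≤ K := Finset.sum_nonneg fun v _ => abs_nonneg (d v)
  set f₁ : V → ℤ := fun v => -(K * aSh m (G.dist u v)) with hf₁
  set d₁ : V → ℤ := fun v => d v + lap m f₁ v with hd₁
  have hlap₁ : ∀ v, v ≠ u → K ≤ lap m f₁ v := by
    intro v hv
    have heq : lap m f₁ v =
        K * ∑ w, (m v w : ℤ) * (aSh m (G.dist u v) - aSh m (G.dist u w)) := by
      rw [lap, Finset.mul_sum]
      apply Finset.sum_congr rfl
      intro w _
      simp only [hf₁]; ring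
    rw [heq]
    have h1 := step1_pt m hsymm hloop hconn u v hv
    nlinarith
  have hd₁eff : ∀ v, v ≠ u → 0 ≤ d₁ v := by
    intro v hv
    have := hlap₁ v hv
    have := hKd v
    simp only [hd₁]
    omega
  have hd₁lin : LinEquiv m d d₁ := by
    have : d - d₁ = lap m (-f₁) := by
      funext v
      rw [lap_neg]
      simp [hd₁]
    rw [LinEquiv, this]
    exact lap_mem_closure m hloop (-f₁)
  -- the potential
  have hnn : ∀ d' : V → ℤ, (∀ v, v ≠ u → 0 ≤ d' v) → 0 ≤ ∑ v, d' v * b v := by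
    intro d' hd'
    apply Finset.sum_nonneg
    intro v _
    by_cases hv : v = u
    · subst hv; rw [hbu, mul_zero]
    · exact mul_nonneg (hd' v hv) (hb_nonneg v)
  set T : Set ℕ := {n : ℕ | ∃ d' : V → ℤ,
      (LinEquiv m d d' ∧ ∀ v, v ≠ u → 0 ≤ d' v) ∧ (∑ v, d' v * b v).toNat = n} with hT
  have hTne : T.Nonempty := ⟨(∑ v, d₁ v * b v).toNat, d₁, ⟨hd₁lin, hd₁eff⟩, rfl⟩
  obtain ⟨d₀, ⟨hd₀lin, hd₀eff⟩, hd₀val⟩ := Nat.sInf_mem hTne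
  -- d₀ is reduced
  have hred₀2 : ∀ A : Finset V, A.Nonempty → u ∉ A → ∃ v ∈ A, d₀ v < ∑ w ∈ Aᶜ, (m v w : ℤ) := by
    intro A hAne huA
    by_contra hcon
    push_neg at hcon
    set d₂ : V → ℤ := fun v => d₀ v + tZ m A v with hd₂
    have hd₂lin : LinEquiv m d d₂ := by
      have heq : d - d₂ = (d - d₀) - tZ m A := by
        funext v; simp only [Pi.sub_apply, hd₂]; ring
      rw [LinEquiv, heq]
      exact sub_mem hd₀lin (AddSubgroup.subset_closure (Set.mem_range_self A))
    have hd₂eff : ∀ v, v ≠ u → 0 ≤ d₂ v := by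
      intro v hv
      simp only [hd₂, tZ]
      by_cases hvA : v ∈ A
      · rw [if_pos hvA]
        have := hcon v hvA
        omega
      · rw [if_neg hvA]
        have h1 := hd₀eff v hv
        have h2 : (0:ℤ) ≤ ∑ w ∈ A, (m v w : ℤ) := Finset.sum_nonneg fun w _ => by positivity
        omega
    have hdec : ∑ v, d₂ v * b v < ∑ v, d₀ v * b v := by
      have hsplit : ∑ v, d₂ v * b v = ∑ v, d₀ v * b v + ∑ v, tZ m A v * b v := by
        rw [← Finset.sum_add_distrib]
        apply Finset.sum_congr rfl
        intro v _
        simp only [hd₂]; ring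
      rw [hsplit]
      have hcut : ∑ v, tZ m A v * b v < 0 := by
        rw [sum_tZ_mul m hsymm A b]
        exact cut_neg m hsymm hloop hconn u A hAne huA
      omega
    have hmem : (∑ v, d₂ v * b v).toNat ∈ T := ⟨d₂, ⟨hd₂lin, hd₂eff⟩, rfl⟩
    have hle := Nat.sInf_le hmem
    have h0₂ := hnn d₂ hd₂eff
    have hlt : (∑ v, d₂ v * b v).toNat < (∑ v, d₀ v * b v).toNat := by
      rw [Int.toNat_lt_toNat]; · exact hdec
      · omega
    omega
  have hred₀ : UReduced m u d₀ := ⟨hd₀eff, hred₀2⟩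
  refine ⟨d₀, ⟨hd₀lin, hred₀⟩, ?_⟩
  -- uniqueness
  rintro d' ⟨hlin', hred'⟩
  have hdiff : d' - d₀ ∈ AddSubgroup.closure (Set.range (tZ m)) := by
    have heq : d' - d₀ = (d - d₀) - (d - d') := by
      funext v; simp only [Pi.sub_apply]; ring
    rw [heq]
    exact sub_mem hd₀lin hlin'
  obtain ⟨f, hf⟩ := (mem_closure_iff_lap m hloop (d' - d₀)).mp hdiff
  by_cases hc : ∀ v, f v = f u
  · have hlap0 : lap m f = 0 := by
      funext v
      rw [lap]
      apply Finset.sum_eq_zero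
      intro w _
      rw [hc w, hc v]; ring
    rw [hlap0] at hf
    exact sub_eq_zero.mp hf
  · push_neg at hc
    obtain ⟨x, hx⟩ := hc
    exfalso
    rcases lt_or_gt_of_ne hx with hlt | hgt
    · -- f x < f u : use -f with roles (d₀, d')
      apply reduced_aux m u d₀ d' (-f) hred₀.1 hred'.2
      · intro v
        have h1 : d' v - d₀ v = lap m f v := congrFun hf v
        have h2 : lap m (-f) v = -(lap m f v) := congrFun (lap_neg m f) v
        omega
      · exact ⟨x, by simp; omega⟩
    · -- f u < f x : use f with roles (d', d₀)
      apply reduced_aux m u d' d₀ f hred'.1 hred₀.2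
      · intro v
        have h1 : d' v - d₀ v = lap m f v := congrFun hf v
        omega
      · exact ⟨x, hgt⟩
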